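/- For any nonnegative integers x and y, the self-duality symmetry ∑_{s=0}^{y} φ_{q,μ,ν}(s|y) q^{s x} = ∑_{t=0}^{x} φ_{q,μ,ν}(t|x) q^{t y} holds, where φ_{q,μ,ν}(s|y) = μ^s ((ν/μ;q)_s (μ;q)_{y−s}/(ν;q)_y) ((q;q)_y/((q;q)_s (q;q)_{y−s})). -/

import Mathlib

open Filter Topology MeasureTheory

/-- Finite q-Pochhammer symbol `(a;q)_n`. -/
noncomputable def qPoch (a q : ℝ) (n : ℕ) : ℝ := ∏ i ∈ Finset.range n, (1 - a * q ^ i)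

/-- Infinite q-Pochhammer symbol `(a;q)_∞`. -/
noncomputable def qPochInf (a q : ℝ) : ℝ := ∏' i : ℕ, (1 - a * q ^ i)

/-- The q-beta-binomial weight `φ_{q,μ,ν}(s|y)`. -/
noncomputable def phiW (q μ ν : ℝ) (s y : ℕ) : ℝ :=
  μ ^ s * (qPoch (ν / μ) q s * qPoch μ q (y - s) / qPoch ν q y) *
    (qPoch q q y / (qPoch q q s * qPoch q q (y - s)))

/-- The weight `φ_{q,μ,ν}(s|∞)`. -/
noncomputable def phiInfW (q μ ν : ℝ) (s : ℕ) : ℝ :=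
  μ ^ s * (qPoch (ν / μ) q s / qPoch q q s) * (qPochInf μ q / qPochInf ν q)

/-- The q-hypergeometric weight `ψ_{q,a,b,c}(p)`. -/
noncomputable def psiW (q a b c : ℝ) (p : ℕ) : ℝ :=
  (c / (a * b)) ^ p * (qPoch a q p * qPoch b q p / (qPoch q q p * qPoch c q p)) *
    (qPochInf c q * qPochInf (c / (a * b)) q / (qPochInf (c / a) q * qPochInf (c / b) q))

/-- The q-Hahn PushTASEP update probability `P_{ℓ,g}(L)`. -/
noncomputable def Phahn (q μ ν : ℝ) (ℓ g L : ℕ) : ℝ :=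
  ∑ p ∈ Finset.range (min ℓ L + 1),
    phiW q⁻¹ (q ^ g) (μ * ν * q ^ ((g : ℤ) - 1)) p ℓ *
      psiW q (ν * μ⁻¹ * q ^ p) (ν * q ^ g) (ν ^ 2 * q ^ (g + p)) (L - p)

lemma qPoch_succ (a q : ℝ) (n : ℕ) :
    qPoch a q (n+1) = qPoch a q n * (1 - a * q ^ n) := Finset.prod_range_succ _ _

lemma qPoch_zero (a q : ℝ) : qPoch a q 0 = 1 := rfl

noncomputable def Ee (q : ℝ) (k x : ℕ) : ℝ := ∏ i ∈ Finset.range k, (1 - q ^ (x - i))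

lemma Ee_zero (q : ℝ) (x : ℕ) : Ee q 0 x = 1 := rfl

lemma Ee_succ (q : ℝ) (k x : ℕ) : Ee q (k+1) x = Ee q k x * (1 - q ^ (x - k)) :=
  Finset.prod_range_succ _ _

lemma Ee_succ' (q : ℝ) (k x : ℕ) : Ee q (k+1) x = (1 - q ^ x) * Ee q k (x-1) := by
  rw [Ee, Finset.prod_range_succ', Nat.sub_zero, mul_comm]
  congr 1
  apply Finset.prod_congr rfl
  intro i _
  rw [show x - (i+1) = (x-1) - i from by omega]

lemma Ee_of_lt (q : ℝ) {k x : ℕ} (h : x < k) : Ee q k x = 0 := by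
  apply Finset.prod_eq_zero (Finset.mem_range.2 h)
  simp

lemma Ee_pow (q : ℝ) (k x : ℕ) :
    q ^ x * Ee q k x = q ^ k * Ee q k x - q ^ k * Ee q (k+1) x := by
  rcases lt_or_ge x k with h | h
  · rw [Ee_of_lt q h, Ee_of_lt q (h.trans (Nat.lt_succ_self k))]
    ring
  · rw [Ee_succ]
    have hp : q ^ k * q ^ (x - k) = q ^ x := by
      rw [← pow_add, Nat.add_sub_cancel' h]
    calc q ^ x * Ee q k x = q ^ k * q ^ (x-k) * Ee q k x := by rw [hp]
      _ = q ^ k * Ee q k x - q ^ k * (Ee q k x * (1 - q ^ (x - k))) := by ring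

lemma Ee_shift (q : ℝ) (k x : ℕ) :
    (q ^ x - 1) * Ee q k (x-1) = -Ee q (k+1) x := by
  rw [Ee_succ']; ring

noncomputable def Nn (q nu : ℝ) (k y : ℕ) : ℝ :=
  ∏ i ∈ Finset.range (y - k), (1 - nu * q ^ (k + i))

lemma Nn_zero (q nu : ℝ) (y : ℕ) : Nn q nu 0 y = qPoch nu q y := by
  simp [Nn, qPoch]

lemma Nn_self (q nu : ℝ) (k : ℕ) : Nn q nu k k = 1 := by
  simp [Nn, Nat.sub_self]

lemma Nn_succ (q nu : ℝ) {k y : ℕ} (h : k ≤ y) :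
    Nn q nu k (y+1) = Nn q nu k y * (1 - nu * q ^ y) := by
  rw [Nn, Nn, Nat.succ_sub h, Finset.prod_range_succ, Nat.add_sub_cancel' h]

lemma Nn_peel (q nu : ℝ) {k y : ℕ} (h : k < y) :
    Nn q nu k y = (1 - nu * q ^ k) * Nn q nu (k+1) y := by
  rw [Nn, Nn, show y - k = (y - (k+1)) + 1 by omega, Finset.prod_range_succ', Nat.add_zero,
    mul_comm]
  congr 1
  apply Finset.prod_congr rfl
  intro i _
  rw [show k + (i+1) = (k+1) + i from by omega]

lemma qPoch_Nn (q nu : ℝ) {k y : ℕ} (h : k ≤ y) :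
    qPoch nu q y = qPoch nu q k * Nn q nu k y := by
  obtain ⟨m, rfl⟩ := Nat.exists_eq_add_of_le h
  clear h
  induction m with
  | zero => simp [Nn_self]
  | succ m ih =>
      rw [show k + (m+1) = (k+m) + 1 from rfl, qPoch_succ, ih,
        Nn_succ q nu (Nat.le_add_right k m)]
      ring

lemma Ee_qPoch (q : ℝ) {s y : ℕ} (h : s ≤ y) :
    Ee q s y * qPoch q q (y - s) = qPoch q q y := by
  induction s with
  | zero => simp [Ee_zero]
  | succ s ih =>
      have h1 : y - s = (y - (s+1)) + 1 := by omega
      have ih' := ih (by omega)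
      rw [h1, qPoch_succ] at ih'
      rw [Ee_succ, h1, ← ih', show q ^ ((y - (s+1)) + 1) = q * q ^ (y - (s+1)) from by
        rw [pow_succ]; ring]
      ring

noncomputable def cpF (q mu nu : ℝ) : ℕ → ℝ
  | 0 => 1
  | (k+1) => cpF q mu nu k * (q ^ k * (nu * q ^ k - mu)) / (1 - q ^ (k+1))

lemma cpF_rel (q mu nu : ℝ) {k : ℕ} (h : (1:ℝ) - q ^ (k+1) ≠ 0) :
    cpF q mu nu (k+1) * (1 - q ^ (k+1)) = q ^ k * (nu * q ^ k - mu) * cpF q mu nu k := by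
  rw [show cpF q mu nu (k+1) = cpF q mu nu k * (q ^ k * (nu * q ^ k - mu)) / (1 - q ^ (k+1)) from rfl]
  field_simp
noncomputable def Rr (q mu nu : ℝ) (x y : ℕ) : ℝ :=
  ∑ k ∈ Finset.range (y+1), cpF q mu nu k * Nn q nu k y * Ee q k x * Ee q k y

lemma P2 (q mu nu : ℝ) {j y : ℕ} (x : ℕ) (hq1 : (1:ℝ) - q^(j+1) ≠ 0) (h : j < y) :
    cpF q mu nu (j+1) * Nn q nu (j+1) y * (1 - nu*q^(y+(j+1))) * Ee q (j+1) x * Ee q (j+1) y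
    = cpF q mu nu (j+1) * Nn q nu (j+1) (y+1) * (1-q^(y+1)) * Ee q (j+1) x * Ee q j y
      - q^y * (nu*q^j - mu) * cpF q mu nu j * Nn q nu j y * Ee q (j+1) x * Ee q j y := by
  obtain ⟨m, rfl⟩ : ∃ m, y = j + 1 + m := ⟨y - (j+1), by omega⟩
  rw [Ee_succ q j (j+1+m), show (j+1+m) - j = m+1 from by omega,
      Nn_succ q nu (show j+1 ≤ j+1+m by omega), Nn_peel q nu h]
  linear_combination (-(q^(m+1)) * (1 - nu*q^j) * Nn q nu (j+1) (j+1+m) * Ee q (j+1) x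
    * Ee q j (j+1+m)) * cpF_rel q mu nu hq1

lemma P1 (q mu nu : ℝ) (x y : ℕ) (hq1 : (1:ℝ) - q^(y+1) ≠ 0) :
    cpF q mu nu (y+1) * Nn q nu (y+1) (y+1) * (1-q^(y+1)) * Ee q (y+1) x * Ee q y y
      - q^y*(nu*q^y - mu)*cpF q mu nu y * Nn q nu y y * Ee q (y+1) x * Ee q y y = 0 := by
  rw [Nn_self, Nn_self]
  linear_combination (Ee q (y+1) x * Ee q y y) * cpF_rel q mu nu hq1

lemma RREC (q mu nu : ℝ) (hq1 : ∀ k : ℕ, (1:ℝ) - q^(k+1) ≠ 0) (x y : ℕ) :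
    Rr q mu nu x (y+1) = (1 - nu * q^(x+y)) * Rr q mu nu x y
      + mu * q^y * (q^x - 1) * Rr q mu nu (x-1) y := by
  have hA : Rr q mu nu x (y+1) = qPoch nu q (y+1)
      + ∑ j ∈ Finset.range (y+1),
          cpF q mu nu (j+1) * Nn q nu (j+1) (y+1) * (1-q^(y+1)) * Ee q (j+1) x * Ee q j y := by
    rw [Rr, Finset.sum_range_succ',
      show cpF q mu nu 0 * Nn q nu 0 (y+1) * Ee q 0 x * Ee q 0 (y+1) = qPoch nu q (y+1) from by
        simp [cpF, Nn_zero, Ee_zero], add_comm]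
    congr 1
    apply Finset.sum_congr rfl
    intro j _
    rw [Ee_succ' q j (y+1), Nat.add_sub_cancel]
    ring
  have hB : (1 - nu*q^(x+y)) * Rr q mu nu x y + mu*q^y*(q^x-1) * Rr q mu nu (x-1) y
      = (∑ k ∈ Finset.range (y+1),
          cpF q mu nu k * Nn q nu k y * (1-nu*q^(y+k)) * Ee q k x * Ee q k y)
      + ∑ k ∈ Finset.range (y+1),
          q^y*(nu*q^k - mu) * cpF q mu nu k * Nn q nu k y * Ee q (k+1) x * Ee q k y := by
    rw [Rr, Rr, Finset.mul_sum, Finset.mul_sum, ← Finset.sum_add_distrib,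
      ← Finset.sum_add_distrib]
    apply Finset.sum_congr rfl
    intro k _
    linear_combination (-(nu*q^y)) * (cpF q mu nu k * Nn q nu k y * Ee q k y) * Ee_pow q k x
      + (mu*q^y) * (cpF q mu nu k * Nn q nu k y * Ee q k y) * Ee_shift q k x
  have hC : (∑ k ∈ Finset.range (y+1),
        cpF q mu nu k * Nn q nu k y * (1-nu*q^(y+k)) * Ee q k x * Ee q k y)
      = qPoch nu q (y+1) + ∑ j ∈ Finset.range (y+1),
          (cpF q mu nu (j+1) * Nn q nu (j+1) (y+1) * (1-q^(y+1)) * Ee q (j+1) x * Ee q j y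
           - q^y*(nu*q^j - mu)*cpF q mu nu j * Nn q nu j y * Ee q (j+1) x * Ee q j y) := by
    rw [Finset.sum_range_succ', Finset.sum_range_succ (fun j =>
        cpF q mu nu (j+1) * Nn q nu (j+1) (y+1) * (1-q^(y+1)) * Ee q (j+1) x * Ee q j y
        - q^y*(nu*q^j - mu)*cpF q mu nu j * Nn q nu j y * Ee q (j+1) x * Ee q j y) y,
      P1 q mu nu x y (hq1 y), add_zero,
      show cpF q mu nu 0 * Nn q nu 0 y * (1-nu*q^y) * Ee q 0 x * Ee q 0 y
          = qPoch nu q (y+1) from by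
        simp [cpF, Nn_zero, Ee_zero, qPoch_succ], add_comm]
    congr 1
    rw [add_zero]
    apply Finset.sum_congr rfl
    intro j hj
    exact P2 q mu nu x (hq1 j) (Finset.mem_range.1 hj)
  rw [hA, hB, hC, Finset.sum_sub_distrib]
  ring
noncomputable def HtF (q mu nu : ℝ) (x y s : ℕ) : ℝ :=
  mu^s * qPoch (nu/mu) q s * qPoch mu q (y-s) * (Ee q s y / qPoch q q s) * q^(s*x)

noncomputable def Hh (q mu nu : ℝ) (x y : ℕ) : ℝ :=
  ∑ s ∈ Finset.range (y+1), HtF q mu nu x y s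

lemma HtF_zero (q mu nu : ℝ) (x y : ℕ) : HtF q mu nu x y 0 = qPoch mu q y := by
  simp [HtF, Ee_zero, qPoch_zero]

lemma pascal (q : ℝ) (hq : ∀ n : ℕ, qPoch q q n ≠ 0) {s y : ℕ} (h : s ≤ y) :
    Ee q (s+1) (y+1) / qPoch q q (s+1)
      = Ee q (s+1) y / qPoch q q (s+1) + q^(y-s) * (Ee q s y / qPoch q q s) := by
  obtain ⟨m, rfl⟩ : ∃ m, y = s + m := ⟨y - s, by omega⟩
  rw [Ee_succ' q s (s+m+1), Nat.add_sub_cancel, Ee_succ q s (s+m),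
    show s+m-s = m from by omega, qPoch_succ q q s]
  have h1 : qPoch q q s ≠ 0 := hq s
  have h2 : (1 : ℝ) - q * q^s ≠ 0 := by
    have := hq (s+1)
    rw [qPoch_succ] at this
    exact (mul_ne_zero_iff.1 this).2
  field_simp
  ring
noncomputable def GG (q mu nu : ℝ) (w y t : ℕ) : ℝ :=
  mu^t * qPoch (nu/mu) q t * qPoch mu q (y+1-t) * (Ee q t y / qPoch q q t) * q^(t*(w+1))

lemma GG_top (q mu nu : ℝ) (w y : ℕ) : GG q mu nu w y (y+1) = 0 := by
  simp [GG, Ee_of_lt q (Nat.lt_succ_self y)]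

lemma GG_zero (q mu nu : ℝ) (w y : ℕ) : GG q mu nu w y 0 = qPoch mu q (y+1) := by
  simp [GG, Ee_zero, qPoch_zero]

lemma PS1 (q mu nu : ℝ) (hq : ∀ n : ℕ, qPoch q q n ≠ 0) (hmu : mu ≠ 0)
    {s y : ℕ} (w : ℕ) (h : s ≤ y) :
    HtF q mu nu (w+1) (y+1) (s+1) = GG q mu nu w y (s+1)
      + q^(y+w+1) * (mu * HtF q mu nu w y s - nu * HtF q mu nu (w+1) y s) := by
  obtain ⟨m, rfl⟩ : ∃ m, y = s + m := ⟨y - s, by omega⟩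
  unfold HtF GG
  rw [pascal q hq (show s ≤ s+m by omega), show (s+m+1) - (s+1) = m from by omega,
    show (s+m) - s = m from by omega, qPoch_succ (nu/mu) q s,
    show (s+1)*(w+1) = s*w+s+w+1 from by ring, show s*(w+1) = s*w + s from by ring]
  have h1 : qPoch q q s ≠ 0 := hq s
  have h2 : qPoch q q (s+1) ≠ 0 := hq (s+1)
  field_simp
  ring

lemma GR (q mu nu : ℝ) {t y : ℕ} (w : ℕ) (h : t ≤ y) :
    GG q mu nu w y t = HtF q mu nu (w+1) y t - mu * q^y * HtF q mu nu w y t := by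
  obtain ⟨m, rfl⟩ : ∃ m, y = t + m := ⟨y - t, by omega⟩
  unfold GG HtF
  rw [show t+m+1-t = m+1 from by omega, show t+m-t = m from by omega, qPoch_succ mu q m,
    show t*(w+1) = t*w+t from by ring]
  ring

lemma REC1 (q mu nu : ℝ) (hq : ∀ n : ℕ, qPoch q q n ≠ 0) (hmu : mu ≠ 0) (w y : ℕ) :
    Hh q mu nu (w+1) (y+1) = (1 - nu*q^(w+1+y)) * Hh q mu nu (w+1) y
      + mu * q^y * (q^(w+1) - 1) * Hh q mu nu w y := by
  have e1 : Hh q mu nu (w+1) (y+1)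
      = ∑ s ∈ Finset.range (y+1), HtF q mu nu (w+1) (y+1) (s+1) + qPoch mu q (y+1) := by
    rw [Hh, Finset.sum_range_succ', HtF_zero]
  have e2 : ∑ s ∈ Finset.range (y+1), HtF q mu nu (w+1) (y+1) (s+1)
      = ∑ s ∈ Finset.range (y+1), GG q mu nu w y (s+1)
        + q^(y+w+1) * (mu * Hh q mu nu w y - nu * Hh q mu nu (w+1) y) := by
    rw [show ∑ s ∈ Finset.range (y+1), HtF q mu nu (w+1) (y+1) (s+1)
        = ∑ s ∈ Finset.range (y+1), (GG q mu nu w y (s+1)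
          + q^(y+w+1) * (mu * HtF q mu nu w y s - nu * HtF q mu nu (w+1) y s)) from
      Finset.sum_congr rfl fun s hs => PS1 q mu nu hq hmu w (Finset.mem_range_succ_iff.1 hs),
      Finset.sum_add_distrib]
    congr 1
    rw [Hh, Hh, ← Finset.mul_sum, Finset.sum_sub_distrib, Finset.mul_sum, Finset.mul_sum]
  have e3 : ∑ s ∈ Finset.range (y+1), GG q mu nu w y (s+1)
      = Hh q mu nu (w+1) y - mu * q^y * Hh q mu nu w y - qPoch mu q (y+1) := by
    have t1 : ∑ t ∈ Finset.range (y+2), GG q mu nu w y t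
        = ∑ s ∈ Finset.range (y+1), GG q mu nu w y (s+1) + GG q mu nu w y 0 :=
      Finset.sum_range_succ' _ _
    have t2 : ∑ t ∈ Finset.range (y+2), GG q mu nu w y t
        = ∑ t ∈ Finset.range (y+1), GG q mu nu w y t := by
      rw [Finset.sum_range_succ, GG_top, add_zero]
    have t3 : ∑ t ∈ Finset.range (y+1), GG q mu nu w y t
        = Hh q mu nu (w+1) y - mu*q^y * Hh q mu nu w y := by
      rw [show ∑ t ∈ Finset.range (y+1), GG q mu nu w y t
          = ∑ t ∈ Finset.range (y+1), (HtF q mu nu (w+1) y t - mu*q^y * HtF q mu nu w y t) from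
        Finset.sum_congr rfl fun t ht => GR q mu nu w (Finset.mem_range_succ_iff.1 ht),
        Finset.sum_sub_distrib, Hh, Hh, Finset.mul_sum]
    rw [GG_zero] at t1
    linarith [t1, t2, t3]
  rw [e1, e2, e3]
  ring

noncomputable def GG0 (q mu nu : ℝ) (y t : ℕ) : ℝ :=
  mu^t * qPoch (nu/mu) q t * qPoch mu q (y+1-t) * (Ee q t y / qPoch q q t)

noncomputable def TT (q mu nu : ℝ) (y t : ℕ) : ℝ :=
  q^(y-t) * (mu^t * qPoch (nu/mu) q t * qPoch mu q (y-t) * (Ee q t y / qPoch q q t))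

lemma GG0_top (q mu nu : ℝ) (y : ℕ) : GG0 q mu nu y (y+1) = 0 := by
  simp [GG0, Ee_of_lt q (Nat.lt_succ_self y)]

lemma GG0_zero (q mu nu : ℝ) (y : ℕ) : GG0 q mu nu y 0 = qPoch mu q (y+1) := by
  simp [GG0, Ee_zero, qPoch_zero]

lemma PS0 (q mu nu : ℝ) (hq : ∀ n : ℕ, qPoch q q n ≠ 0) (hmu : mu ≠ 0)
    {s y : ℕ} (h : s ≤ y) :
    HtF q mu nu 0 (y+1) (s+1) = GG0 q mu nu y (s+1)
      + (mu * TT q mu nu y s - nu * q^y * HtF q mu nu 0 y s) := by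
  obtain ⟨m, rfl⟩ : ∃ m, y = s + m := ⟨y - s, by omega⟩
  unfold HtF GG0 TT
  rw [pascal q hq (show s ≤ s+m by omega), show (s+m+1) - (s+1) = m from by omega,
    show (s+m) - s = m from by omega, qPoch_succ (nu/mu) q s, Nat.mul_zero]
  have h1 : qPoch q q s ≠ 0 := hq s
  have h2 : qPoch q q (s+1) ≠ 0 := hq (s+1)
  field_simp
  ring

lemma GR0 (q mu nu : ℝ) {t y : ℕ} (h : t ≤ y) :
    GG0 q mu nu y t = HtF q mu nu 0 y t - mu * TT q mu nu y t := by
  obtain ⟨m, rfl⟩ : ∃ m, y = t + m := ⟨y - t, by omega⟩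
  unfold GG0 HtF TT
  rw [show t+m+1-t = m+1 from by omega, show t+m-t = m from by omega, qPoch_succ mu q m,
    Nat.mul_zero]
  ring

lemma REC0 (q mu nu : ℝ) (hq : ∀ n : ℕ, qPoch q q n ≠ 0) (hmu : mu ≠ 0) (y : ℕ) :
    Hh q mu nu 0 (y+1) = (1 - nu*q^y) * Hh q mu nu 0 y := by
  have e1 : Hh q mu nu 0 (y+1)
      = ∑ s ∈ Finset.range (y+1), HtF q mu nu 0 (y+1) (s+1) + qPoch mu q (y+1) := by
    rw [Hh, Finset.sum_range_succ', HtF_zero]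
  have e2 : ∑ s ∈ Finset.range (y+1), HtF q mu nu 0 (y+1) (s+1)
      = ∑ s ∈ Finset.range (y+1), GG0 q mu nu y (s+1)
        + (mu * ∑ s ∈ Finset.range (y+1), TT q mu nu y s - nu * q^y * Hh q mu nu 0 y) := by
    rw [show ∑ s ∈ Finset.range (y+1), HtF q mu nu 0 (y+1) (s+1)
        = ∑ s ∈ Finset.range (y+1), (GG0 q mu nu y (s+1)
          + (mu * TT q mu nu y s - nu * q^y * HtF q mu nu 0 y s)) from
      Finset.sum_congr rfl fun s hs => PS0 q mu nu hq hmu (Finset.mem_range_succ_iff.1 hs),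
      Finset.sum_add_distrib]
    congr 1
    rw [Hh, Finset.sum_sub_distrib, Finset.mul_sum, Finset.mul_sum]
  have e3 : ∑ s ∈ Finset.range (y+1), GG0 q mu nu y (s+1)
      = Hh q mu nu 0 y - mu * ∑ s ∈ Finset.range (y+1), TT q mu nu y s
        - qPoch mu q (y+1) := by
    have t1 : ∑ t ∈ Finset.range (y+2), GG0 q mu nu y t
        = ∑ s ∈ Finset.range (y+1), GG0 q mu nu y (s+1) + GG0 q mu nu y 0 :=
      Finset.sum_range_succ' _ _
    have t2 : ∑ t ∈ Finset.range (y+2), GG0 q mu nu y t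
        = ∑ t ∈ Finset.range (y+1), GG0 q mu nu y t := by
      rw [Finset.sum_range_succ, GG0_top, add_zero]
    have t3 : ∑ t ∈ Finset.range (y+1), GG0 q mu nu y t
        = Hh q mu nu 0 y - mu * ∑ s ∈ Finset.range (y+1), TT q mu nu y s := by
      rw [show ∑ t ∈ Finset.range (y+1), GG0 q mu nu y t
          = ∑ t ∈ Finset.range (y+1), (HtF q mu nu 0 y t - mu * TT q mu nu y t) from
        Finset.sum_congr rfl fun t ht => GR0 q mu nu (Finset.mem_range_succ_iff.1 ht),
        Finset.sum_sub_distrib, Hh, Finset.mul_sum]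
    rw [GG0_zero] at t1
    linarith [t1, t2, t3]
  rw [e1, e2, e3]
  ring
lemma KL (q mu nu : ℝ) (hq : ∀ n : ℕ, qPoch q q n ≠ 0)
    (hq1 : ∀ k : ℕ, (1:ℝ) - q^(k+1) ≠ 0) (hmu : mu ≠ 0) :
    ∀ y x, Hh q mu nu x y = Rr q mu nu x y := by
  intro y
  induction y with
  | zero =>
      intro x
      simp [Hh, Rr, HtF_zero, qPoch_zero, cpF, Nn_self, Ee_zero]
  | succ y ih =>
      intro x
      match x with
      | 0 =>
          rw [REC0 q mu nu hq hmu y, ih 0, RREC q mu nu hq1 0 y]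
          norm_num
      | (w+1) =>
          rw [REC1 q mu nu hq hmu w y, RREC q mu nu hq1 (w+1) y, ih (w+1), ih w]
          norm_num

lemma ext_sum (q mu nu : ℝ) (a b N : ℕ) (hb : b + 1 ≤ N) :
    ∑ k ∈ Finset.range (b+1), cpF q mu nu k * Ee q k a * Ee q k b / qPoch nu q k
      = ∑ k ∈ Finset.range N, cpF q mu nu k * Ee q k a * Ee q k b / qPoch nu q k := by
  apply Finset.sum_subset
  · exact Finset.range_subset_range.2 hb
  · intro k _ hk
    have hbk : b < k := by
      by_contra hc
      exact hk (Finset.mem_range.2 (by omega))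
    rw [Ee_of_lt q hbk]
    simp

/-- Self-duality symmetry of the q-beta-binomial weights. -/
theorem stmt_1 (q mu nu : ℝ) (x y : ℕ) (hmu : mu ≠ 0)
    (hnux : qPoch nu q x ≠ 0) (hnuy : qPoch nu q y ≠ 0) (hqs : ∀ n : ℕ, qPoch q q n ≠ 0) :
    ∑ s ∈ Finset.range (y + 1), phiW q mu nu s y * q ^ (s * x)
      = ∑ t ∈ Finset.range (x + 1), phiW q mu nu t x * q ^ (t * y) := by
  have hq1 : ∀ k : ℕ, (1:ℝ) - q^(k+1) ≠ 0 := by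
    intro k
    have h := hqs (k+1)
    rw [qPoch_succ] at h
    have h2 := (mul_ne_zero_iff.1 h).2
    rwa [show q * q^k = q^(k+1) from by rw [pow_succ]; ring] at h2
  have key : ∀ (a b : ℕ), qPoch nu q b ≠ 0 →
      ∑ s ∈ Finset.range (b+1), phiW q mu nu s b * q^(s*a)
        = ∑ k ∈ Finset.range (b+1),
            cpF q mu nu k * Ee q k a * Ee q k b / qPoch nu q k := by
    intro a b hnb
    have s1 : ∑ s ∈ Finset.range (b+1), phiW q mu nu s b * q^(s*a)
        = ∑ s ∈ Finset.range (b+1), HtF q mu nu a b s / qPoch nu q b := by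
      apply Finset.sum_congr rfl
      intro s hs
      have hsb : s ≤ b := Finset.mem_range_succ_iff.1 hs
      rw [phiW, HtF, ← Ee_qPoch q hsb]
      have h1 : qPoch q q s ≠ 0 := hqs s
      have h2 : qPoch q q (b-s) ≠ 0 := hqs (b-s)
      field_simp
    rw [s1, ← Finset.sum_div,
      show (∑ s ∈ Finset.range (b+1), HtF q mu nu a b s) = Hh q mu nu a b from rfl,
      KL q mu nu hqs hq1 hmu b a, Rr, Finset.sum_div]
    apply Finset.sum_congr rfl
    intro k hk
    have hkb : k ≤ b := Finset.mem_range_succ_iff.1 hk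
    have hsplit : qPoch nu q b = qPoch nu q k * Nn q nu k b := qPoch_Nn q nu hkb
    have hk1 : qPoch nu q k ≠ 0 := fun h0 => hnb (by rw [hsplit, h0, zero_mul])
    have hk2 : Nn q nu k b ≠ 0 := fun h0 => hnb (by rw [hsplit, h0, mul_zero])
    rw [hsplit]
    field_simp
  rw [key x y hnuy, key y x hnux, ext_sum q mu nu x y (x+y+1) (by omega),
    ext_sum q mu nu y x (x+y+1) (by omega)]
  apply Finset.sum_congr rfl
  intro k _
  ring
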